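/- Let γ > 1 and c_v > 0. The function η(τ, w, E) = c_v·((1−γ)·ln τ − ln(E − w²/2)) is strictly convex on the open convex set D = {(τ, w, E) ∈ ℝ³ : τ > 0 and E − w²/2 > 0}. (In particular, D is convex, and η is the mathematical entropy η = −S, up to an additive constant, of the polytropic ideal γ-law gas written in the conserved variables (τ, w, E), where E = w²/2 + ℰ is the total energy and ℰ the internal energy.) -/

import Mathlib

open MeasureTheory Filter

noncomputable section

abbrev E3 := EuclideanSpace ℝ (Fin 3)

/-- The physical domain `{(τ,w,E) : τ > 0 and E - w²/2 > 0}`. -/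
def posDomain3 : Set E3 := {u | 0 < u 0 ∧ 0 < u 2 - (u 1)^2 / 2}

/-- The mathematical entropy `η = c_v((1-γ)ln τ - ln(E - w²/2))` of the γ-law gas in the
conserved variables `(τ, w, E)`. -/
def etaEuler (γ cv : ℝ) (u : E3) : ℝ :=
  cv * ((1 - γ) * Real.log (u 0) - Real.log (u 2 - (u 1)^2 / 2))

lemma log_combo_lt {x y a b : ℝ} (hx : 0 < x) (hy : 0 < y) (hxy : x ≠ y)
    (ha : 0 < a) (hb : 0 < b) (hab : a + b = 1) :
    a * Real.log x + b * Real.log y < Real.log (a * x + b * y) := by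
  have := strictConcaveOn_log_Ioi.2 (Set.mem_Ioi.mpr hx) (Set.mem_Ioi.mpr hy) hxy ha hb hab
  simpa [smul_eq_mul] using this

lemma log_combo_le {x y a b : ℝ} (hx : 0 < x) (hy : 0 < y)
    (ha : 0 < a) (hb : 0 < b) (hab : a + b = 1) :
    a * Real.log x + b * Real.log y ≤ Real.log (a * x + b * y) := by
  rcases eq_or_ne x y with rfl | hxy
  · rw [← add_mul, hab, one_mul, ← add_mul, hab, one_mul]
  · exact (log_combo_lt hx hy hxy ha hb hab).le


lemma key_ineq {γ a b lt lg l1 l2 m1 m2 : ℝ} (hγ : 1 < γ)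
    (h1 : a * l1 + b * l2 ≤ lt) (h2 : a * m1 + b * m2 ≤ lg)
    (hstrict : a * l1 + b * l2 < lt ∨ a * m1 + b * m2 < lg) :
    (1 - γ) * lt - lg < a * ((1 - γ) * l1 - m1) + b * ((1 - γ) * l2 - m2) := by
  have hneg : (1 : ℝ) - γ < 0 := by linarith
  rcases hstrict with h | h
  · have e1 : (1 - γ) * lt < (1 - γ) * (a * l1 + b * l2) := by
      exact mul_lt_mul_of_neg_left h hneg
    nlinarith [e1, h2]
  · have e1 : (1 - γ) * lt ≤ (1 - γ) * (a * l1 + b * l2) := by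
      exact mul_le_mul_of_nonpos_left h1 hneg.le
    nlinarith [e1, h]

/-- The domain `D = {τ > 0, E - w²/2 > 0}` is convex and the mathematical
entropy `η = -S` of the polytropic ideal γ-law gas is strictly convex on it. -/
theorem stmt10 (γ cv : ℝ) (hγ : 1 < γ) (hcv : 0 < cv) :
    Convex ℝ posDomain3 ∧ StrictConvexOn ℝ posDomain3 (etaEuler γ cv) := by
  have happly : ∀ (a b : ℝ) (u v : E3) (i : Fin 3),
      (a • u + b • v) i = a * u i + b * v i := by
    intro a b u v i
    simp [smul_eq_mul]
  -- key: internal energy of combination exceeds combination of internal energies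
  have hkey : ∀ (a b : ℝ) (u v : E3), a + b = 1 →
      (a • u + b • v) 2 - ((a • u + b • v) 1)^2 / 2
        = a * (u 2 - (u 1)^2/2) + b * (v 2 - (v 1)^2/2) + a * b * (u 1 - v 1)^2 / 2 := by
    intro a b u v hab
    rw [happly, happly]
    obtain rfl : b = 1 - a := by linarith
    ring
  have hconv : Convex ℝ posDomain3 := by
    intro u hu v hv a b ha hb hab
    obtain ⟨hu1, hu2⟩ := hu
    obtain ⟨hv1, hv2⟩ := hv
    constructor
    · rw [happly]
      rcases eq_or_lt_of_le ha with h | h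
      · have hb1 : b = 1 := by linarith
        simp [← h, hb1, hv1]
      · nlinarith [mul_pos h hu1, mul_nonneg hb hv1.le]
    · rw [hkey a b u v hab]
      rcases eq_or_lt_of_le ha with h | h
      · have hb1 : b = 1 := by linarith
        simp [← h, hb1]; linarith
      · nlinarith [mul_pos h hu2, mul_nonneg hb hv2.le,
          mul_nonneg (mul_nonneg h.le hb) (sq_nonneg (u 1 - v 1))]
  refine ⟨hconv, hconv, ?_⟩
  intro u hu v hv huv a b ha hb hab
  obtain ⟨hu1, hu2⟩ := hu
  obtain ⟨hv1, hv2⟩ := hv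
  have hEq : etaEuler γ cv (a • u + b • v)
      = cv * ((1 - γ) * Real.log (a * u 0 + b * v 0)
        - Real.log (a * (u 2 - (u 1)^2/2) + b * (v 2 - (v 1)^2/2)
            + a * b * (u 1 - v 1)^2 / 2)) := by
    simp only [etaEuler]
    rw [happly, hkey a b u v hab]
  have hab2 : a * b * (u 1 - v 1)^2 / 2 ≥ 0 := by positivity
  have hcomb_pos : 0 < a * (u 2 - (u 1)^2/2) + b * (v 2 - (v 1)^2/2) := by
    nlinarith [mul_pos ha hu2, mul_pos hb hv2]
  -- two inequalities
  have hlogτ : a * Real.log (u 0) + b * Real.log (v 0)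
      ≤ Real.log (a * u 0 + b * v 0) := log_combo_le hu1 hv1 ha hb hab
  have hlogg : a * Real.log (u 2 - (u 1)^2/2) + b * Real.log (v 2 - (v 1)^2/2)
      ≤ Real.log (a * (u 2 - (u 1)^2/2) + b * (v 2 - (v 1)^2/2)
          + a * b * (u 1 - v 1)^2 / 2) := by
    calc a * Real.log (u 2 - (u 1)^2/2) + b * Real.log (v 2 - (v 1)^2/2)
        ≤ Real.log (a * (u 2 - (u 1)^2/2) + b * (v 2 - (v 1)^2/2)) :=
          log_combo_le hu2 hv2 ha hb hab
      _ ≤ _ := by apply Real.log_le_log hcomb_pos; linarith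
  -- strictness in at least one term
  have hstrictor : a * Real.log (u 0) + b * Real.log (v 0) < Real.log (a * u 0 + b * v 0)
      ∨ a * Real.log (u 2 - (u 1)^2/2) + b * Real.log (v 2 - (v 1)^2/2)
        < Real.log (a * (u 2 - (u 1)^2/2) + b * (v 2 - (v 1)^2/2)
            + a * b * (u 1 - v 1)^2 / 2) := by
    rcases eq_or_ne (u 0) (v 0) with h0 | h0
    · rcases eq_or_ne (u 1) (v 1) with h1 | h1
      · have h2 : u 2 ≠ v 2 := by
          intro h2
          apply huv
          ext i
          fin_cases i <;> assumption
        have hg12 : u 2 - (u 1)^2/2 ≠ v 2 - (v 1)^2/2 := by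
          rw [h1]; intro h; apply h2; linarith
        refine Or.inr ?_
        calc a * Real.log (u 2 - (u 1)^2/2) + b * Real.log (v 2 - (v 1)^2/2)
            < Real.log (a * (u 2 - (u 1)^2/2) + b * (v 2 - (v 1)^2/2)) :=
              log_combo_lt hu2 hv2 hg12 ha hb hab
          _ ≤ _ := by apply Real.log_le_log hcomb_pos; linarith
      · have hsq : 0 < a * b * (u 1 - v 1)^2 / 2 := by
          have h1' : (0:ℝ) < (u 1 - v 1)^2 := by
            have hne : u 1 - v 1 ≠ 0 := sub_ne_zero_of_ne h1
            positivity
          positivity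
        refine Or.inr ?_
        calc a * Real.log (u 2 - (u 1)^2/2) + b * Real.log (v 2 - (v 1)^2/2)
            ≤ Real.log (a * (u 2 - (u 1)^2/2) + b * (v 2 - (v 1)^2/2)) :=
              log_combo_le hu2 hv2 ha hb hab
          _ < _ := by apply Real.log_lt_log hcomb_pos; linarith
    · exact Or.inl (log_combo_lt hu1 hv1 h0 ha hb hab)
  have hstrict := key_ineq hγ hlogτ hlogg hstrictor
  rw [hEq]
  have hrhs : a • etaEuler γ cv u + b • etaEuler γ cv v
      = cv * (a * ((1 - γ) * Real.log (u 0) - Real.log (u 2 - (u 1)^2/2))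
        + b * ((1 - γ) * Real.log (v 0) - Real.log (v 2 - (v 1)^2/2))) := by
    simp only [etaEuler, smul_eq_mul]; ring
  rw [hrhs]
  exact (mul_lt_mul_iff_right₀ hcv).mpr hstrict
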